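/- arXiv:1311.5277 — 2 statements merged into one kernel-verified Lean document; each statement's English description precedes it below -/
import Mathlib

section
/- The operator s + s* on H has no eigenvalues: if λ ∈ ℂ and ξ ∈ H satisfy (s + s*) ξ = λ ξ, then ξ = 0. -/
open ContinuousLinearMap

noncomputable section

/-- The Hilbert space `ℓ²(ℕ, ℂ)`. -/
abbrev H : Type := lp (fun _ : ℕ => ℂ) 2

/-- The standard orthonormal basis of `ℓ²(ℕ, ℂ)`. -/
def ξ (n : ℕ) : H := lp.single 2 n 1

local notation "⟪" x ", " y "⟫" => @inner ℂ _ _ x y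

lemma coord_eq (x : H) (n : ℕ) : ⟪ξ n, x⟫ = x n := by
  simp [ξ, lp.inner_single_left]

lemma adj_xi_zero (s : H →L[ℂ] H) (hs : ∀ n : ℕ, s (ξ n) = ξ (n + 1)) :
    adjoint s (ξ 0) = 0 := by
  apply lp.ext
  funext m
  have : ⟪ξ m, adjoint s (ξ 0)⟫ = 0 := by
    rw [adjoint_inner_right, hs, coord_eq]
    simp [ξ, lp.single_apply]
  rw [coord_eq] at this
  simpa [lp.coeFn_zero] using this

lemma adj_xi_succ (s : H →L[ℂ] H) (hs : ∀ n : ℕ, s (ξ n) = ξ (n + 1)) (k : ℕ) :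
    adjoint s (ξ (k + 1)) = ξ k := by
  apply lp.ext
  funext m
  have : ⟪ξ m, adjoint s (ξ (k + 1))⟫ = (ξ k : ∀ _ : ℕ, ℂ) m := by
    rw [adjoint_inner_right, hs, coord_eq]
    simp only [ξ, lp.single_apply, Pi.single_apply]
    split_ifs with h1 h2 h2
    · subst h2; rfl
    · exact (h2 (by omega)).elim
    · exact (h1 (by omega)).elim
    · rfl
  rw [coord_eq] at this
  exact this

/-- If `s` is the unilateral shift on `ℓ²(ℕ,ℂ)`, then the operator `s + s*` has no
eigenvalues: any eigenvector equation `(s + s*) v = λ v` forces `v = 0`. -/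
theorem stmt8 (s : H →L[ℂ] H)
    (hs : ∀ n : ℕ, s (ξ n) = ξ (n + 1))
    (lam : ℂ) (v : H)
    (heig : (s + adjoint s) v = lam • v) :
    v = 0 := by
  set a : ℕ → ℂ := fun n => v n with ha
  -- componentwise eigenvalue equation
  have comp : ∀ n : ℕ, ⟪adjoint s (ξ n), v⟫ + a (n + 1) = lam * a n := by
    intro n
    have h1 : ⟪ξ n, s v⟫ + ⟪ξ n, (adjoint s) v⟫ = lam * a n := by
      rw [← inner_add_right, ← add_apply, heig, inner_smul_right, coord_eq]
    rw [← adjoint_inner_left, adjoint_inner_right, hs, coord_eq] at h1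
    exact h1
  have rec0 : a 1 = lam * a 0 := by
    have := comp 0
    rwa [adj_xi_zero s hs, inner_zero_left, zero_add] at this
  have recS : ∀ n : ℕ, a n + a (n + 2) = lam * a (n + 1) := by
    intro n
    have := comp (n + 1)
    rwa [adj_xi_succ s hs, coord_eq] at this
  rcases eq_or_ne v 0 with hv | hv
  · exact hv
  -- lam is real
  have hlam : lam = (lam.re : ℂ) := by
    have hsa : ⟪(s + adjoint s) v, v⟫ = ⟪v, (s + adjoint s) v⟫ := by
      simp only [add_apply, inner_add_left, inner_add_right, adjoint_inner_left,
        adjoint_inner_right]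
      ring
    rw [heig, inner_smul_left, inner_smul_right] at hsa
    have hvv : ⟪v, v⟫ ≠ 0 := inner_self_ne_zero.mpr hv
    have hconj : (starRingEnd ℂ) lam = lam := mul_right_cancel₀ hvv hsa
    exact (Complex.conj_eq_iff_re.mp hconj).symm
  set t : ℝ := lam.re with ht
  have rec0' : a 1 = (t : ℂ) * a 0 := by rw [rec0, hlam]
  have recS' : ∀ n : ℕ, a (n + 2) = (t : ℂ) * a (n + 1) - a n := by
    intro n
    have := recS n
    rw [hlam] at this
    linear_combination this
  -- conserved energy
  set E : ℕ → ℝ := fun n =>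
    Complex.normSq (a (n + 1)) + Complex.normSq (a n)
      - t * ((starRingEnd ℂ) (a n) * a (n + 1)).re with hE
  have hEstep : ∀ n : ℕ, E (n + 1) = E n := by
    intro n
    simp only [hE, recS' n]
    simp only [Complex.normSq_apply, Complex.mul_re, Complex.mul_im, Complex.sub_re,
      Complex.sub_im, Complex.conj_re, Complex.conj_im, Complex.ofReal_re, Complex.ofReal_im]
    ring
  have hEconst : ∀ n : ℕ, E n = Complex.normSq (a 0) := by
    intro n
    induction n with
    | zero =>
      simp only [hE, rec0']
      simp only [Complex.normSq_apply, Complex.mul_re, Complex.mul_im, Complex.conj_re,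
        Complex.conj_im, Complex.ofReal_re, Complex.ofReal_im]
      ring
    | succ k ih => rw [hEstep k, ih]
  -- a tends to zero
  have hsum : Summable fun n => ‖a n‖ ^ (2 : ENNReal).toReal :=
    (lp.memℓp v).summable (by norm_num)
  have hsum2 : Summable fun n => ‖a n‖ ^ 2 := by
    have h2 : (2 : ENNReal).toReal = (2 : ℝ) := by norm_num
    simpa [h2, Real.rpow_natCast] using hsum
  have hnorm2 : Filter.Tendsto (fun n => ‖a n‖ ^ 2) Filter.atTop (nhds 0) :=
    hsum2.tendsto_atTop_zero
  have hnorm : Filter.Tendsto (fun n => ‖a n‖) Filter.atTop (nhds 0) := by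
    have := hnorm2.sqrt
    simpa [Real.sqrt_sq (norm_nonneg _)] using this
  have ha0 : Filter.Tendsto a Filter.atTop (nhds 0) :=
    tendsto_zero_iff_norm_tendsto_zero.mpr hnorm
  have ha1 : Filter.Tendsto (fun n => a (n + 1)) Filter.atTop (nhds 0) :=
    ha0.comp (Filter.tendsto_add_atTop_nat 1)
  have tnsq : Filter.Tendsto (fun n => Complex.normSq (a n)) Filter.atTop (nhds 0) := by
    simpa [Function.comp_def] using (Complex.continuous_normSq.tendsto 0).comp ha0
  have tnsq1 : Filter.Tendsto (fun n => Complex.normSq (a (n + 1))) Filter.atTop (nhds 0) := by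
    simpa [Function.comp_def] using (Complex.continuous_normSq.tendsto 0).comp ha1
  have tcross : Filter.Tendsto (fun n => ((starRingEnd ℂ) (a n) * a (n + 1)).re)
      Filter.atTop (nhds 0) := by
    have h1 : Filter.Tendsto (fun n => (starRingEnd ℂ) (a n) * a (n + 1))
        Filter.atTop (nhds 0) := by
      simpa using (ha0.star.mul ha1)
    have h2 := (Complex.continuous_re.tendsto 0).comp h1
    simpa only [Function.comp_def, Complex.zero_re] using h2
  have hEtends : Filter.Tendsto E Filter.atTop (nhds 0) := by
    have := (tnsq1.add tnsq).sub (tcross.const_mul t)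
    simpa [hE, mul_comm] using this
  have hEzero : Complex.normSq (a 0) = 0 := by
    have hconst : Filter.Tendsto E Filter.atTop (nhds (Complex.normSq (a 0))) := by
      have : E = fun _ => Complex.normSq (a 0) := funext hEconst
      rw [this]
      exact tendsto_const_nhds
    exact tendsto_nhds_unique hconst hEtends
  have ha00 : a 0 = 0 := Complex.normSq_eq_zero.mp hEzero
  -- all coefficients vanish
  have hzero : ∀ n : ℕ, a n = 0 ∧ a (n + 1) = 0 := by
    intro n
    induction n with
    | zero => exact ⟨ha00, by rw [rec0', ha00, mul_zero]⟩
    | succ k ih => exact ⟨ih.2, by rw [recS' k, ih.1, ih.2, mul_zero, sub_zero]⟩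
  apply lp.ext
  funext n
  have : a n = 0 := (hzero n).1
  simpa [lp.coeFn_zero] using this
end
end

section
/- If T is a compact operator on H (in particular, if T is Hilbert–Schmidt) that commutes with s + s*, i.e. T ∘ (s + s*) = (s + s*) ∘ T, then T = 0. -/
open ContinuousLinearMap

noncomputable section

open scoped InnerProductSpace ComplexConjugate ENNReal
open Filter Topology

set_option maxHeartbeats 1000000
set_option synthInstance.maxHeartbeats 200000

/-- Inner product with `ξ m` extracts the `m`-th coordinate. -/
lemma xi_coord (v : H) (m : ℕ) : ⟪ξ m, v⟫_ℂ = v m := by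
  rw [ξ, lp.inner_single_left]
  simp [RCLike.inner_apply]

lemma xi_inner (a b : ℕ) : ⟪ξ a, ξ b⟫_ℂ = if a = b then 1 else 0 := by
  rw [xi_coord, ξ, lp.single_apply]
  by_cases h : a = b <;> simp [h]

lemma xi_norm (n : ℕ) : ‖ξ n‖ = 1 := by
  have h : ⟪ξ n, ξ n⟫_ℂ = 1 := by rw [xi_inner]; simp
  rw [norm_eq_sqrt_re_inner (𝕜 := ℂ), h]
  simp

/-- Two vectors with the same coordinates are equal. -/
lemma H_ext {v w : H} (h : ∀ m, ⟪ξ m, v⟫_ℂ = ⟪ξ m, w⟫_ℂ) : v = w := by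
  apply lp.ext
  funext m
  have := h m
  rwa [xi_coord, xi_coord] at this

/-- Coordinates of an `ℓ²` vector tend to zero. -/
lemma coord_tendsto (u : H) : Tendsto (fun j => u j) atTop (𝓝 (0:ℂ)) := by
  have hsum : Summable (fun j => ‖u j‖ ^ (2:ℝ)) := by
    have h := (lp.memℓp u).summable (p := 2) (by norm_num)
    simpa using h
  have h2 : Tendsto (fun j => ‖u j‖ ^ (2:ℝ)) atTop (𝓝 0) :=
    hsum.tendsto_atTop_zero
  have hsq : Tendsto (fun j => Real.sqrt (‖u j‖ ^ (2:ℝ))) atTop (𝓝 (Real.sqrt 0)) :=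
    (Real.continuous_sqrt.tendsto 0).comp h2
  have hnorm : Tendsto (fun j => ‖u j‖) atTop (𝓝 0) := by
    have heq : ∀ j, Real.sqrt (‖u j‖ ^ (2:ℝ)) = ‖u j‖ := by
      intro j
      have h4 : (2:ℝ) = ((2:ℕ):ℝ) := by norm_num
      rw [h4, Real.rpow_natCast, Real.sqrt_sq (norm_nonneg _)]
    simpa [heq, Real.sqrt_zero] using hsq
  exact tendsto_zero_iff_norm_tendsto_zero.mpr hnorm

/-- If `s` is the unilateral shift on `ℓ²(ℕ,ℂ)` and `T` is a compact operator on `H`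
commuting with `s + s*`, then `T = 0`. -/
theorem stmt10 (s : H →L[ℂ] H)
    (hs : ∀ n : ℕ, s (ξ n) = ξ (n + 1))
    (T : H →L[ℂ] H) (hT : IsCompactOperator (⇑T))
    (hcomm : T ∘L (s + adjoint s) = (s + adjoint s) ∘L T) :
    T = 0 := by
  set A : H →L[ℂ] H := s + adjoint s with hA
  -- the adjoint of the shift
  have hs0 : adjoint s (ξ 0) = 0 := by
    apply H_ext
    intro m
    rw [adjoint_inner_right, hs m, xi_inner]
    simp
  have hsS : ∀ m : ℕ, adjoint s (ξ (m + 1)) = ξ m := by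
    intro m
    apply H_ext
    intro k
    rw [adjoint_inner_right, hs k, xi_inner, xi_inner]
    by_cases h : k = m <;> simp [h]
  -- action of A on basis vectors
  have hA0 : A (ξ 0) = ξ 1 := by
    simp [hA, add_apply, hs 0, hs0]
  have hAS : ∀ n : ℕ, A (ξ (n + 1)) = ξ (n + 2) + ξ n := by
    intro n
    simp [hA, add_apply, hs (n+1), hsS n]
  -- A is self-adjoint
  have hAsa : adjoint A = A := by
    rw [hA, map_add, adjoint_adjoint, add_comm]
  -- commutation on vectors
  have hcv : ∀ x : H, T (A x) = A (T x) := by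
    intro x
    have := DFunLike.congr_fun hcomm x
    simpa [comp_apply] using this
  -- matrix entries
  set t : ℕ → ℕ → ℂ := fun m n => ⟪ξ m, T (ξ n)⟫_ℂ with ht
  have E : ∀ m n : ℕ, ⟪ξ m, T (A (ξ n))⟫_ℂ = ⟪A (ξ m), T (ξ n)⟫_ℂ := by
    intro m n
    rw [hcv, ← adjoint_inner_left A, hAsa]
  have R1 : t 0 1 = t 1 0 := by
    have := E 0 0
    rwa [hA0] at this
    
  have R2 : ∀ m, t (m+1) 1 = t (m+2) 0 + t m 0 := by
    intro m
    have := E (m+1) 0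
    rwa [hA0, hAS m, inner_add_left] at this
  have R3 : ∀ n, t 0 (n+2) + t 0 n = t 1 (n+1) := by
    intro n
    have := E 0 (n+1)
    rwa [hAS n, hA0, map_add, inner_add_right] at this
  have R4 : ∀ m n, t (m+1) (n+2) + t (m+1) n = t (m+2) (n+1) + t m (n+1) := by
    intro m n
    have := E (m+1) (n+1)
    rwa [hAS n, hAS m, map_add, inner_add_right, inner_add_left] at this
  -- compactness: T ξ n → 0 in norm
  have htend : Tendsto (fun n => T (ξ n)) atTop (𝓝 0) := by
    apply tendsto_of_subseq_tendsto
    intro ns hns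
    obtain ⟨K, hK, hKsub⟩ :=
      IsCompactOperator.image_closedBall_subset_compact (𝕜₁ := ℂ)
        (f := (T : H →ₗ[ℂ] H)) hT 2
    have hmem : ∀ k, T (ξ (ns k)) ∈ K := by
      intro k
      apply hKsub
      exact ⟨ξ (ns k), by simp [Metric.mem_closedBall, xi_norm], rfl⟩
    obtain ⟨a, _, φ, hφ, hconv⟩ := hK.tendsto_subseq hmem
    have ha : a = 0 := by
      apply H_ext
      intro m
      have h1 : Tendsto (fun k => ⟪ξ m, T (ξ (ns (φ k)))⟫_ℂ) atTop (𝓝 ⟪ξ m, a⟫_ℂ) :=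
        tendsto_const_nhds.inner hconv
      have h2 : Tendsto (fun k => ⟪ξ m, T (ξ (ns (φ k)))⟫_ℂ) atTop (𝓝 0) := by
        have heq : ∀ j : ℕ, ⟪ξ m, T (ξ j)⟫_ℂ = conj ((adjoint T (ξ m)) j) := by
          intro j
          rw [← adjoint_inner_left T, ← inner_conj_symm, xi_coord]
        have hidx : Tendsto (fun k => ns (φ k)) atTop atTop :=
          hns.comp hφ.tendsto_atTop
        have hc : Tendsto (fun j : ℕ => conj ((adjoint T (ξ m)) j)) atTop (𝓝 (0:ℂ)) := by
          have := (coord_tendsto (adjoint T (ξ m)))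
          simpa [Function.comp_def] using (Complex.continuous_conj.tendsto 0).comp this
        simpa [heq, Function.comp_def] using hc.comp hidx
      simpa [inner_zero_right] using tendsto_nhds_unique h1 h2
    exact ⟨φ, by simpa [ha, Function.comp_def] using hconv⟩
  -- diagonals of t tend to zero
  have hdk : ∀ a b : ℕ, Tendsto (fun k => t (a + k) (b + k)) atTop (𝓝 0) := by
    intro a b
    rw [tendsto_zero_iff_norm_tendsto_zero]
    have key : ∀ k, ‖t (a+k) (b+k)‖ ≤ ‖T (ξ (b+k))‖ := by
      intro k
      have h := norm_inner_le_norm (𝕜 := ℂ) (ξ (a+k)) (T (ξ (b+k)))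
      rw [xi_norm, one_mul] at h
      exact h
    have hb : Tendsto (fun k => ‖T (ξ (b + k))‖) atTop (𝓝 0) := by
      have h1 : Tendsto (fun k => b + k) atTop atTop := by
        simpa [Nat.add_comm] using tendsto_add_atTop_nat b
      exact tendsto_zero_iff_norm_tendsto_zero.mp (htend.comp h1)
    exact squeeze_zero (fun k => norm_nonneg _) key hb
  -- the discrete wave equation argument
  set D : ℕ → ℕ → ℂ := fun m n => t (m+1) n - t m (n+1) with hD
  have hD4 : ∀ m n, D (m+1) (n+1) = D m n := by
    intro m n
    have := R4 m n
    simp only [hD]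
    have h2 : m + 1 + 1 = m + 2 := by ring
    have h3 : n + 1 + 1 = n + 2 := by ring
    rw [h2, h3]
    linear_combination -this
  have hDshift : ∀ k m n, D (m+k) (n+k) = D m n := by
    intro k
    induction k with
    | zero => intro m n; rfl
    | succ k ih =>
      intro m n
      have : m + (k+1) = (m + k) + 1 := by ring
      rw [this]
      have : n + (k+1) = (n + k) + 1 := by ring
      rw [this, hD4, ih]
  have hD0 : ∀ m n, D m n = 0 := by
    intro m n
    have hconst : Tendsto (fun k => D (m+k) (n+k)) atTop (𝓝 (D m n)) := by
      simpa [hDshift] using (tendsto_const_nhds : Tendsto (fun _ : ℕ => D m n) atTop _)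
    have hzero : Tendsto (fun k => D (m+k) (n+k)) atTop (𝓝 0) := by
      have h1 := hdk (m+1) n
      have h2 := hdk m (n+1)
      have := h1.sub h2
      simp only [sub_zero] at this
      convert this using 2 with k
      simp only [hD]
      congr 2 <;> ring
    exact tendsto_nhds_unique hconst hzero
  have hflat : ∀ m n, t (m+1) n = t m (n+1) := by
    intro m n
    have := hD0 m n
    simp only [hD] at this
    exact sub_eq_zero.mp this
  -- columns and rows vanish
  have hcol : ∀ m, t m 0 = 0 := by
    intro m
    have h1 := R2 m
    have h2 := hflat (m+1) 0
    have h3 : m + 1 + 1 = m + 2 := by ring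
    rw [h3] at h2
    linear_combination -h1 - h2
  have hrow : ∀ n, t 0 n = 0 := by
    intro n
    have h1 := R3 n
    have h2 := hflat 0 (n+1)
    have h3 : n + 1 + 1 = n + 2 := by ring
    rw [h3] at h2
    linear_combination h1 + h2
  have hall : ∀ m n, t m n = 0 := by
    intro m
    induction m with
    | zero => exact hrow
    | succ m ih => intro n; rw [hflat m n]; exact ih (n+1)
  -- conclude T = 0
  have hTstar : ∀ m, adjoint T (ξ m) = 0 := by
    intro m
    apply H_ext
    intro n
    rw [adjoint_inner_right, inner_zero_right, ← inner_conj_symm]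
    rw [show ⟪ξ m, T (ξ n)⟫_ℂ = t m n from rfl, hall m n]
    simp
  refine ContinuousLinearMap.ext fun x => ?_
  rw [zero_apply]
  apply H_ext
  intro m
  rw [← adjoint_inner_left, hTstar m]
  simp

end
end
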